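/- Let μ be a centred probability measure on ℝ with no atoms and let F : ℝ × ℝ → ℝ be upper semicontinuous and strictly supermodular such that for every w the function s ↦ F(w,s) is strictly increasing on all of ℝ. Assume w ↦ F(w, β_μ(w)) is μ-integrable. Then for every Rogers-admissible probability measure π with marginal μ such that F is π-integrable, one has ∫ F dπ ≤ ∫ F(w, β_μ(w)) dμ(w). -/

import Mathlib

open MeasureTheory Set

noncomputable section

/-- The set `M = {(x,y) : y ≥ 0 and y ≥ x}`. -/
def MSet : Set (ℝ × ℝ) := {p : ℝ × ℝ | 0 ≤ p.2 ∧ p.1 ≤ p.2}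

/-- A probability measure on `ℝ` is centred if the identity is integrable with mean `0`. -/
def Centred (μ : Measure ℝ) : Prop :=
  Integrable (fun x : ℝ => x) μ ∧ (∫ x, x ∂μ) = 0

/-- Strict supermodularity of a bivariate function. -/
def StrictlySupermodular (F : ℝ × ℝ → ℝ) : Prop :=
  ∀ w₁ w₂ s₁ s₂ : ℝ, w₁ < w₂ → s₁ < s₂ →
    F (w₁, s₂) + F (w₂, s₁) < F (w₁, s₁) + F (w₂, s₂)

/-- `F` is serrated with ridge `a : ℝ → EReal`: for every `w`, `s ↦ F (w, s)` is
strictly increasing on `{s | s < a w}` and strictly decreasing on `{s | a w < s}`. -/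
def SerratedWithRidge (F : ℝ × ℝ → ℝ) (a : ℝ → EReal) : Prop :=
  ∀ w : ℝ,
    StrictMonoOn (fun s : ℝ => F (w, s)) {s : ℝ | (s : EReal) < a w} ∧
    StrictAntiOn (fun s : ℝ => F (w, s)) {s : ℝ | a w < (s : EReal)}

/-- Rogers' conditions for `π` to be the joint law of the terminal value and the
running maximum of a UI martingale started at `0` with terminal law `μ`. -/
def RogersAdmissible (μ : Measure ℝ) (π : Measure (ℝ × ℝ)) : Prop :=
  Integrable (fun p : ℝ × ℝ => p.1) π ∧
  (∫ p : ℝ × ℝ, p.1 ∂π) = 0 ∧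
  π MSetᶜ = 0 ∧
  (∀ s : ℝ, 0 ≤ s →
    s * (π {p : ℝ × ℝ | s ≤ p.2}).toReal ≤ ∫ p in {p : ℝ × ℝ | s ≤ p.2}, p.1 ∂π) ∧
  Measure.map Prod.fst π = μ

/-- The barycenter function of `μ`. -/
def barycenter (μ : Measure ℝ) (w : ℝ) : ℝ :=
  if 0 < (μ (Ici w)).toReal then (∫ x in Ici w, x ∂μ) / (μ (Ici w)).toReal else w

/-- `g(w) = min(β_μ(w), max(a(w), 0, w))`, the max computed in `EReal`. -/
def ridgeG (μ : Measure ℝ) (a : ℝ → EReal) (w : ℝ) : ℝ :=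
  (min ((barycenter μ w : ℝ) : EReal) (max (a w) (max (0 : EReal) ((w : ℝ) : EReal)))).toReal

namespace AYaux

variable {μ : Measure ℝ}

lemma bary_of_pos (w : ℝ) (h : μ (Ici w) ≠ 0) [IsFiniteMeasure μ] :
    barycenter μ w = (∫ x in Ici w, x ∂μ) / (μ (Ici w)).toReal := by
  rw [barycenter, if_pos]
  exact ENNReal.toReal_pos h (measure_ne_top μ _)

lemma setIntegral_Ici_eq [IsFiniteMeasure μ] (hμ1 : Integrable (fun x : ℝ => x) μ) (w : ℝ)
    (h : μ (Ici w) ≠ 0) :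
    ∫ x in Ici w, x ∂μ = barycenter μ w * (μ (Ici w)).toReal := by
  rw [bary_of_pos w h, div_mul_cancel₀]
  exact ENNReal.toReal_ne_zero.2 ⟨h, measure_ne_top μ _⟩

lemma bary_ge_self [IsFiniteMeasure μ] (hμ1 : Integrable (fun x : ℝ => x) μ) (w : ℝ) :
    w ≤ barycenter μ w := by
  rcases eq_or_ne (μ (Ici w)) 0 with h | h
  · rw [barycenter, if_neg]
    simp [h]
  · rw [bary_of_pos w h]
    rw [le_div_iff₀ (ENNReal.toReal_pos h (measure_ne_top μ _))]
    have : ∫ x in Ici w, (w:ℝ) ∂μ ≤ ∫ x in Ici w, x ∂μ := by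
      apply setIntegral_mono_on (integrableOn_const (measure_ne_top μ _))
        (hμ1.integrableOn) measurableSet_Ici
      intro x hx; exact hx
    simpa [Measure.restrict_apply_univ, mul_comm, measureReal_def] using this

lemma bary_mono [IsFiniteMeasure μ] (hμ1 : Integrable (fun x : ℝ => x) μ) :
    Monotone (barycenter μ) := by
  intro w1 w2 h12
  rcases eq_or_lt_of_le h12 with rfl | h12; · exact le_rfl
  have hsplit : Ico w1 w2 ∪ Ici w2 = Ici w1 := Ico_union_Ici_eq_Ici h12.le
  have hdisj : Disjoint (Ico w1 w2) (Ici w2) := by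
    apply Set.disjoint_left.2; intro x hx hx2; exact absurd hx.2 (not_lt.2 hx2)
  have hIntIco : IntegrableOn (fun x : ℝ => x) (Ico w1 w2) μ := hμ1.integrableOn
  have hIntIci : IntegrableOn (fun x : ℝ => x) (Ici w2) μ := hμ1.integrableOn
  have hunion : ∫ x in Ici w1, x ∂μ
      = (∫ x in Ico w1 w2, x ∂μ) + ∫ x in Ici w2, x ∂μ := by
    rw [← hsplit, setIntegral_union hdisj measurableSet_Ici hIntIco hIntIci]
  have hmeq : μ (Ici w1) = μ (Ico w1 w2) + μ (Ici w2) := by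
    rw [← hsplit, measure_union hdisj measurableSet_Ici]
  have hIco_le : ∫ x in Ico w1 w2, x ∂μ ≤ w2 * (μ (Ico w1 w2)).toReal := by
    have : ∫ x in Ico w1 w2, x ∂μ ≤ ∫ x in Ico w1 w2, (w2:ℝ) ∂μ := by
      apply setIntegral_mono_on hIntIco
        (integrableOn_const (measure_ne_top μ _)) measurableSet_Ico
      intro x hx; exact hx.2.le
    simpa [mul_comm, measureReal_def] using this
  rcases eq_or_ne (μ (Ici w2)) 0 with h2 | h2
  · have hb2 : barycenter μ w2 = w2 := by rw [barycenter, if_neg]; simp [h2]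
    rw [hb2]
    rcases eq_or_ne (μ (Ici w1)) 0 with h1 | h1
    · rw [barycenter, if_neg]; · exact h12.le
      simp [h1]
    · rw [bary_of_pos w1 h1, div_le_iff₀ (ENNReal.toReal_pos h1 (measure_ne_top μ _))]
      have hz : ∫ x in Ici w2, x ∂μ = 0 := by
        rw [Measure.restrict_eq_zero.2 h2]; simp
      rw [hunion, hz, add_zero]
      calc ∫ x in Ico w1 w2, x ∂μ ≤ w2 * (μ (Ico w1 w2)).toReal := hIco_le
        _ = w2 * (μ (Ici w1)).toReal := by rw [hmeq, h2]; simp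
  · have h1 : μ (Ici w1) ≠ 0 := by
      intro h; apply h2; rw [← le_zero_iff, ← h]
      exact measure_mono (Ici_subset_Ici.2 h12.le)
    have hm1pos := ENNReal.toReal_pos h1 (measure_ne_top μ _)
    rw [bary_of_pos w1 h1, div_le_iff₀ hm1pos]
    have hw2b : w2 ≤ barycenter μ w2 := bary_ge_self hμ1 w2
    have h2' : ∫ x in Ici w2, x ∂μ = barycenter μ w2 * (μ (Ici w2)).toReal :=
      setIntegral_Ici_eq hμ1 w2 h2
    have : ∫ x in Ici w1, x ∂μ
        ≤ barycenter μ w2 * ((μ (Ico w1 w2)).toReal + (μ (Ici w2)).toReal) := by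
      rw [hunion, h2', mul_add]
      exact add_le_add (hIco_le.trans (by
        apply mul_le_mul_of_nonneg_right hw2b ENNReal.toReal_nonneg)) le_rfl
    calc ∫ x in Ici w1, x ∂μ
        ≤ barycenter μ w2 * ((μ (Ico w1 w2)).toReal + (μ (Ici w2)).toReal) := this
      _ = barycenter μ w2 * (μ (Ici w1)).toReal := by
          rw [hmeq, ENNReal.toReal_add (measure_ne_top μ _) (measure_ne_top μ _)]

lemma measure_Ici_zero_ne [IsProbabilityMeasure μ] (hμ : Centred μ) :
    μ (Ici (0:ℝ)) ≠ 0 := by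
  intro h0
  have hae : ∀ᵐ u ∂μ, u ∈ Iio (0:ℝ) := by
    rw [ae_iff]
    simpa using measure_mono_null (fun u hu => by simpa using hu) h0
  have hg : ∀ᵐ u ∂μ, max (-u) 0 = -u := by
    filter_upwards [hae] with u hu
    exact max_eq_left (by linarith [mem_Iio.1 hu])
  have hgint : Integrable (fun u : ℝ => max (-u) 0) μ := by
    exact hμ.1.neg.pos_part
  have hgzero : ∫ u, max (-u) 0 ∂μ = 0 := by
    rw [integral_congr_ae hg, integral_neg, hμ.2, neg_zero]
  have := (integral_eq_zero_iff_of_nonneg (fun u => le_max_right _ _) hgint).1 hgzero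
  have hcontr : ∀ᵐ u ∂μ, False := by
    filter_upwards [hae, this] with u hu h2
    have : max (-u) 0 = 0 := by exact h2
    have : -u ≤ 0 := by
      by_contra hc
      rw [max_eq_left (le_of_lt (not_le.1 hc))] at this
      linarith [not_le.1 hc]
    linarith [mem_Iio.1 hu]
  exact (IsProbabilityMeasure.ne_zero μ) (by simpa [ae_iff, Filter.eventually_false_iff_eq_bot] using hcontr)

lemma bary_nonneg [IsProbabilityMeasure μ] (hμ : Centred μ) (x : ℝ) :
    0 ≤ barycenter μ x := by
  rcases le_or_gt x 0 with hx | hx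
  · have hne : μ (Ici x) ≠ 0 := by
      intro h
      exact measure_Ici_zero_ne hμ
        (le_antisymm (le_trans (measure_mono (Ici_subset_Ici.2 hx)) h.le) zero_le)
    rw [bary_of_pos x hne]
    apply div_nonneg _ ENNReal.toReal_nonneg
    have hsplit : (∫ u in Ici x, u ∂μ) + ∫ u in (Ici x)ᶜ, u ∂μ = ∫ u, u ∂μ :=
      integral_add_compl measurableSet_Ici hμ.1
    have hcompl : (Ici x)ᶜ = Iio x := compl_Ici
    have hneg : ∫ u in (Ici x)ᶜ, u ∂μ ≤ 0 := by
      rw [hcompl]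
      calc ∫ u in Iio x, u ∂μ ≤ ∫ u in Iio x, (x:ℝ) ∂μ := by
            apply setIntegral_mono_on hμ.1.integrableOn
              (integrableOn_const (measure_ne_top μ _)) measurableSet_Iio
            intro u hu; exact (mem_Iio.1 hu).le
        _ = x * (μ (Iio x)).toReal := by simp [mul_comm, measureReal_def]
        _ ≤ 0 := mul_nonpos_iff.2 (Or.inr ⟨hx, ENNReal.toReal_nonneg⟩)
    linarith [hsplit, hμ.2]
  · exact le_trans hx.le (bary_ge_self hμ.1 x)

lemma exists_bary_lt [IsProbabilityMeasure μ] (hμ : Centred μ) (t : ℝ) (ht : 0 < t) :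
    ∃ x : ℝ, barycenter μ x < t := by
  set c := (μ (Ici (0:ℝ))).toReal with hc
  have hcpos : 0 < c :=
    ENNReal.toReal_pos (measure_Ici_zero_ne hμ) (measure_ne_top μ _)
  have htend : Filter.Tendsto (fun n : ℕ => ∫ u in Ici (-(n:ℝ)), u ∂μ)
      Filter.atTop (nhds 0) := by
    have hun : ⋃ n : ℕ, Ici (-(n:ℝ)) = univ := by
      apply eq_univ_of_forall
      intro x
      obtain ⟨n, hn⟩ := exists_nat_ge (-x)
      exact mem_iUnion.2 ⟨n, by simpa using neg_le.1 hn⟩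
    have := MeasureTheory.tendsto_setIntegral_of_monotone
      (s := fun n : ℕ => Ici (-(n:ℝ))) (f := fun u : ℝ => u)
      (fun n => measurableSet_Ici)
      (fun m n hmn => Ici_subset_Ici.2 (by exact_mod_cast neg_le_neg (by exact_mod_cast hmn)))
      (by rw [hun]; exact hμ.1.integrableOn)
    rw [hun] at this
    simpa [hμ.2] using this
  obtain ⟨n, hn⟩ := (Filter.tendsto_atTop'.1 htend (Ioo (-(t*c)) (t*c))
    (Ioo_mem_nhds (by nlinarith [mul_pos ht hcpos]) (by nlinarith [mul_pos ht hcpos]))) 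
  have hint : ∫ u in Ici (-(n:ℝ)), u ∂μ < t * c := (hn n le_rfl).2
  refine ⟨-(n:ℝ), ?_⟩
  have hne : μ (Ici (-(n:ℝ))) ≠ 0 := by
    intro h
    exact measure_Ici_zero_ne hμ (le_antisymm
      (le_trans (measure_mono (Ici_subset_Ici.2 (by simp [neg_nonpos]))) h.le) zero_le)
  rw [bary_of_pos _ hne, div_lt_iff₀ (ENNReal.toReal_pos hne (measure_ne_top μ _))]
  have hcle : c ≤ (μ (Ici (-(n:ℝ)))).toReal := by
    apply ENNReal.toReal_mono (measure_ne_top μ _)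
    exact measure_mono (Ici_subset_Ici.2 (by simp [neg_nonpos]))
  calc ∫ u in Ici (-(n:ℝ)), u ∂μ < t * c := hint
    _ ≤ t * (μ (Ici (-(n:ℝ)))).toReal := by nlinarith

/-- inverse barycenter -/
def bfun (μ : Measure ℝ) (t : ℝ) : ℝ := sInf {x | t ≤ barycenter μ x}

lemma bfun_set_nonempty [IsFiniteMeasure μ] (hμ1 : Integrable (fun x : ℝ => x) μ) (t : ℝ) :
    {x | t ≤ barycenter μ x}.Nonempty :=
  ⟨t, bary_ge_self hμ1 t⟩

lemma bfun_set_bddBelow [IsProbabilityMeasure μ] (hμ : Centred μ) (t : ℝ) (ht : 0 < t) :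
    BddBelow {x | t ≤ barycenter μ x} := by
  obtain ⟨x0, hx0⟩ := exists_bary_lt hμ t ht
  refine ⟨x0, fun x hx => ?_⟩
  by_contra hc
  exact absurd (le_trans hx (bary_mono hμ.1 (not_le.1 hc).le)) (not_le.2 hx0)

lemma le_bfun [IsFiniteMeasure μ] (hμ1 : Integrable (fun x : ℝ => x) μ) {x t : ℝ}
    (h : barycenter μ x < t) : x ≤ bfun μ t := by
  apply le_csInf (bfun_set_nonempty hμ1 t)
  intro y hy
  by_contra hc
  exact absurd (le_trans hy (bary_mono hμ1 (not_le.1 hc).le)) (not_le.2 h)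

lemma bfun_le [IsProbabilityMeasure μ] (hμ : Centred μ) {x t : ℝ} (ht : 0 < t)
    (h : t ≤ barycenter μ x) : bfun μ t ≤ x :=
  csInf_le (bfun_set_bddBelow hμ t ht) h

lemma bfun_mono [IsProbabilityMeasure μ] (hμ : Centred μ) {t1 t2 : ℝ} (ht1 : 0 < t1)
    (h : t1 ≤ t2) : bfun μ t1 ≤ bfun μ t2 :=
  csInf_le_csInf (bfun_set_bddBelow hμ t1 ht1) (bfun_set_nonempty hμ.1 t2)
    (fun x hx => le_trans h hx)

section Fbasics

variable {F : ℝ × ℝ → ℝ}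

lemma supermod_nonstrict (hFsm : StrictlySupermodular F) {w1 w2 s1 s2 : ℝ}
    (hw : w1 ≤ w2) (hs : s1 ≤ s2) :
    F (w1, s2) - F (w1, s1) ≤ F (w2, s2) - F (w2, s1) := by
  rcases eq_or_lt_of_le hw with rfl | hw
  · exact le_rfl
  rcases eq_or_lt_of_le hs with rfl | hs
  · simp
  linarith [hFsm w1 w2 s1 s2 hw hs]

lemma F_rc (hFusc : UpperSemicontinuous F)
    (hinc : ∀ w : ℝ, StrictMono (fun s : ℝ => F (w, s))) (w t : ℝ) :
    Filter.Tendsto (fun s : ℝ => F (w, s)) (nhdsWithin t (Ici t)) (nhds (F (w, t))) := by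
  have husc : UpperSemicontinuous (fun s : ℝ => F (w, s)) :=
    hFusc.comp (continuous_const.prodMk continuous_id)
  apply tendsto_order.2
  constructor
  · intro a ha
    have : ∀ s ∈ Ici t, a < F (w, s) := fun s hs =>
      lt_of_lt_of_le ha ((hinc w).monotone hs)
    filter_upwards [self_mem_nhdsWithin] with s hs using this s hs
  · intro a ha
    have := husc t a ha
    exact Filter.eventually_iff_exists_mem.2
      (Filter.eventually_iff_exists_mem.1 (nhdsWithin_le_nhds this))

end Fbasics

/-! ### Partition sums -/

def Lsum (F : ℝ × ℝ → ℝ) (μ : Measure ℝ) : ℝ → List ℝ → ℝ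
  | _, [] => 0
  | x, y :: l => (F (bfun μ x, y) - F (bfun μ x, x)) + Lsum F μ y l

def PS (F : ℝ × ℝ → ℝ) (μ : Measure ℝ) (a b : ℝ) : Set ℝ :=
  {r | ∃ l : List ℝ, List.Chain (· ≤ ·) a (l ++ [b]) ∧ r = Lsum F μ a (l ++ [b])}

def Phiab (F : ℝ × ℝ → ℝ) (μ : Measure ℝ) (a b : ℝ) : ℝ := sSup (PS F μ a b)

variable {F : ℝ × ℝ → ℝ} {μ : Measure ℝ}

lemma chain_bounds {b : ℝ} :
    ∀ (l : List ℝ) (x : ℝ), List.Chain (· ≤ ·) x (l ++ [b]) →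
      ∀ y ∈ x :: l, x ≤ y ∧ y ≤ b := by
  intro l
  induction l with
  | nil =>
    intro x hch y hy
    simp at hy
    subst hy
    rcases hch with _ | ⟨hxy, _⟩
    exact ⟨le_rfl, by assumption⟩
  | cons z l ih =>
    intro x hch y hy
    rcases hch with _ | _ | ⟨hxz, hch'⟩
    rcases List.mem_cons.1 hy with rfl | hy'
    · exact ⟨le_rfl, le_trans hxz ((ih z hch' z (List.mem_cons_self)).2)⟩
    · have := ih z hch' y hy'
      exact ⟨le_trans hxz this.1, this.2⟩

lemma chain_le_last {b x : ℝ} {l : List ℝ} (hch : List.Chain (· ≤ ·) x (l ++ [b])) :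
    x ≤ b :=
  (chain_bounds l x hch x (List.mem_cons_self)).2

lemma Lsum_nonneg (hinc : ∀ w : ℝ, StrictMono (fun s : ℝ => F (w, s))) :
    ∀ (l : List ℝ) (x : ℝ), List.Chain (· ≤ ·) x l → 0 ≤ Lsum F μ x l := by
  intro l
  induction l with
  | nil => intro x _; simp [Lsum]
  | cons y l ih =>
    intro x hch
    rcases hch with _ | _ | ⟨hxy, hch'⟩
    have h1 : F (bfun μ x, x) ≤ F (bfun μ x, y) := (hinc _).monotone hxy
    have h2 := ih y hch'
    simp only [Lsum]
    linarith

lemma Lsum_le (hFsm : StrictlySupermodular F) {X b : ℝ} :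
    ∀ (l : List ℝ) (x : ℝ), List.Chain (· ≤ ·) x (l ++ [b]) →
      (∀ y ∈ x :: l, bfun μ y ≤ X) →
      Lsum F μ x (l ++ [b]) ≤ F (X, b) - F (X, x) := by
  intro l
  induction l with
  | nil =>
    intro x hch hb
    rcases hch with _ | ⟨hxb, _⟩
    simp only [List.nil_append, Lsum, add_zero]
    exact supermod_nonstrict hFsm (hb x (List.mem_cons_self)) (by assumption)
  | cons y l ih =>
    intro x hch hb
    rcases hch with _ | _ | ⟨hxy, hch'⟩
    have h1 : F (bfun μ x, y) - F (bfun μ x, x) ≤ F (X, y) - F (X, x) :=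
      supermod_nonstrict hFsm (hb x (List.mem_cons_self)) hxy
    have h2 := ih y hch' (fun z hz => hb z (List.mem_cons_of_mem x hz))
    simp only [List.cons_append, Lsum, List.append_eq]
    linarith

lemma single_mem_PS {a b : ℝ} (hab : a ≤ b) :
    F (bfun μ a, b) - F (bfun μ a, a) ∈ PS F μ a b := by
  refine ⟨[], ?_, by simp [Lsum]⟩
  exact List.Chain.cons hab List.Chain.nil

lemma PS_nonempty {a b : ℝ} (hab : a ≤ b) : (PS F μ a b).Nonempty :=
  ⟨_, single_mem_PS hab⟩

lemma PS_bddAbove [IsProbabilityMeasure μ] (hμ : Centred μ) (hFsm : StrictlySupermodular F)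
    {a b : ℝ} (ha : 0 < a) (hab : a ≤ b) : BddAbove (PS F μ a b) := by
  refine ⟨F (bfun μ b, b) - F (bfun μ b, a), ?_⟩
  rintro r ⟨l, hch, rfl⟩
  apply Lsum_le hFsm l a hch
  intro y hy
  obtain ⟨hy1, hy2⟩ := chain_bounds l a hch y hy
  exact bfun_mono hμ (lt_of_lt_of_le ha hy1) hy2

lemma Phiab_le [IsProbabilityMeasure μ] (hμ : Centred μ) (hFsm : StrictlySupermodular F)
    {a b X : ℝ} (hab : a ≤ b)
    (hX : ∀ y, a ≤ y → y ≤ b → bfun μ y ≤ X) :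
    Phiab F μ a b ≤ F (X, b) - F (X, a) := by
  apply csSup_le (PS_nonempty hab)
  rintro r ⟨l, hch, rfl⟩
  apply Lsum_le hFsm l a hch
  intro y hy
  obtain ⟨hy1, hy2⟩ := chain_bounds l a hch y hy
  exact hX y hy1 hy2

lemma le_Phiab [IsProbabilityMeasure μ] (hμ : Centred μ) (hFsm : StrictlySupermodular F)
    {a b : ℝ} (ha : 0 < a) (hab : a ≤ b) :
    F (bfun μ a, b) - F (bfun μ a, a) ≤ Phiab F μ a b :=
  le_csSup (PS_bddAbove hμ hFsm ha hab) (single_mem_PS hab)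

lemma Phiab_nonneg [IsProbabilityMeasure μ] (hμ : Centred μ) (hFsm : StrictlySupermodular F)
    (hinc : ∀ w : ℝ, StrictMono (fun s : ℝ => F (w, s)))
    {a b : ℝ} (ha : 0 < a) (hab : a ≤ b) : 0 ≤ Phiab F μ a b := by
  refine le_trans ?_ (le_Phiab hμ hFsm ha hab)
  have := (hinc (bfun μ a)).monotone hab
  simpa using sub_nonneg.2 this

lemma Lsum_concat {x y : ℝ} (l m : List ℝ) :
    Lsum F μ x (l ++ y :: m) = Lsum F μ x (l ++ [y]) + Lsum F μ y m := by
  induction l generalizing x with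
  | nil => simp [Lsum]
  | cons z l ih =>
    simp only [List.cons_append, Lsum, List.append_eq, ih (x := z)]
    ring

lemma chain_concat {x y : ℝ} {l m : List ℝ}
    (h1 : List.Chain (· ≤ ·) x (l ++ [y])) (h2 : List.Chain (· ≤ ·) y m) :
    List.Chain (· ≤ ·) x (l ++ y :: m) := by
  induction l generalizing x with
  | nil =>
    rcases h1 with _ | ⟨hxy, _⟩
    exact List.Chain.cons (by assumption) h2
  | cons z l ih =>
    rcases h1 with _ | _ | ⟨hxz, h1'⟩
    exact List.Chain.cons (by assumption) (ih h1')

lemma Phiab_superadd [IsProbabilityMeasure μ] (hμ : Centred μ)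
    (hFsm : StrictlySupermodular F) {a b c : ℝ} (ha : 0 < a) (hab : a ≤ b) (hbc : b ≤ c) :
    Phiab F μ a b + Phiab F μ b c ≤ Phiab F μ a c := by
  have key : ∀ r1 ∈ PS F μ a b, ∀ r2 ∈ PS F μ b c, r1 + r2 ≤ Phiab F μ a c := by
    rintro r1 ⟨l1, hch1, rfl⟩ r2 ⟨l2, hch2, rfl⟩
    apply le_csSup (PS_bddAbove hμ hFsm ha (le_trans hab hbc))
    refine ⟨l1 ++ b :: l2, ?_, ?_⟩
    · have := chain_concat hch1 hch2
      simpa [List.append_assoc] using this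
    · rw [List.append_assoc, List.cons_append]
      exact (Lsum_concat l1 (l2 ++ [c])).symm
  have h2 : ∀ r1 ∈ PS F μ a b, Phiab F μ b c ≤ Phiab F μ a c - r1 := fun r1 h1 =>
    csSup_le (PS_nonempty hbc) (fun r2 hr2 => by linarith [key r1 h1 r2 hr2])
  have h3 : Phiab F μ a b ≤ Phiab F μ a c - Phiab F μ b c :=
    csSup_le (PS_nonempty hab) (fun r1 h1 => by linarith [h2 r1 h1])
  linarith

lemma PS_split [IsProbabilityMeasure μ] (hμ : Centred μ)
    (hFsm : StrictlySupermodular F) {b c : ℝ} (hbc : b ≤ c) :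
    ∀ (l : List ℝ) (x : ℝ), 0 < x → x ≤ b → List.Chain (· ≤ ·) x (l ++ [c]) →
      ∃ r1 ∈ PS F μ x b, ∃ r2 ∈ PS F μ b c, Lsum F μ x (l ++ [c]) ≤ r1 + r2 := by
  intro l
  induction l with
  | nil =>
    intro x hx hxb hch
    have hbb : bfun μ x ≤ bfun μ b := bfun_mono hμ hx hxb
    refine ⟨_, single_mem_PS hxb, _, single_mem_PS hbc, ?_⟩
    simp only [List.nil_append, Lsum, add_zero]
    have := supermod_nonstrict hFsm hbb hbc
    linarith
  | cons y l ih =>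
    intro x hx hxb hch
    rcases hch with _ | _ | ⟨hxy, hch'⟩
    rcases le_or_gt y b with hyb | hby
    · obtain ⟨r1, ⟨m, hm, rfl⟩, r2, h2, hle⟩ :=
        ih y (lt_of_lt_of_le hx hxy) hyb hch'
      refine ⟨F (bfun μ x, y) - F (bfun μ x, x) + Lsum F μ y (m ++ [b]),
        ⟨y :: m, ?_, ?_⟩, r2, h2, ?_⟩
      · exact List.Chain.cons hxy hm
      · simp only [List.cons_append, Lsum, List.append_eq]
      · have heq : Lsum F μ x ((y :: l) ++ [c])
            = F (bfun μ x, y) - F (bfun μ x, x) + Lsum F μ y (l ++ [c]) := by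
          simp only [List.cons_append, Lsum, List.append_eq]
        rw [heq]
        linarith
    · have hbb : bfun μ x ≤ bfun μ b := bfun_mono hμ hx hxb
      refine ⟨_, single_mem_PS hxb,
        F (bfun μ b, y) - F (bfun μ b, b) + Lsum F μ y (l ++ [c]),
        ⟨y :: l, List.Chain.cons hby.le hch', by simp only [List.cons_append, Lsum, List.append_eq]⟩, ?_⟩
      simp only [List.cons_append, Lsum, List.append_eq]
      have := supermod_nonstrict hFsm hbb hby.le
      linarith

lemma Phiab_subadd [IsProbabilityMeasure μ] (hμ : Centred μ)
    (hFsm : StrictlySupermodular F) {a b c : ℝ} (ha : 0 < a) (hab : a ≤ b) (hbc : b ≤ c) :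
    Phiab F μ a c ≤ Phiab F μ a b + Phiab F μ b c := by
  apply csSup_le (PS_nonempty (le_trans hab hbc))
  rintro r ⟨l, hch, rfl⟩
  obtain ⟨r1, h1, r2, h2, hle⟩ := PS_split hμ hFsm hbc l a ha hab hch
  have e1 : r1 ≤ Phiab F μ a b := le_csSup (PS_bddAbove hμ hFsm ha hab) h1
  have e2 : r2 ≤ Phiab F μ b c :=
    le_csSup (PS_bddAbove hμ hFsm (lt_of_lt_of_le ha hab) hbc) h2
  linarith

lemma Phiab_add [IsProbabilityMeasure μ] (hμ : Centred μ)
    (hFsm : StrictlySupermodular F) {a b c : ℝ} (ha : 0 < a) (hab : a ≤ b) (hbc : b ≤ c) :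
    Phiab F μ a c = Phiab F μ a b + Phiab F μ b c :=
  le_antisymm (Phiab_subadd hμ hFsm ha hab hbc) (Phiab_superadd hμ hFsm ha hab hbc)

/-! ### The global function Φ -/

def PhiZeroSet (F : ℝ × ℝ → ℝ) (μ : Measure ℝ) : Set ℝ :=
  {r | ∃ ε : ℝ, 0 < ε ∧ ε ≤ 1 ∧ r = Phiab F μ ε 1}

def PhiZero (F : ℝ × ℝ → ℝ) (μ : Measure ℝ) : ℝ := sSup (PhiZeroSet F μ)

def Phi (F : ℝ × ℝ → ℝ) (μ : Measure ℝ) (t : ℝ) : ℝ :=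
  if 1 ≤ t then Phiab F μ 1 t
  else if 0 < t then -Phiab F μ t 1
  else -PhiZero F μ

section PhiFacts

variable [IsProbabilityMeasure μ]

variable (hμ : Centred μ) (hFsm : StrictlySupermodular F)
  (hinc : ∀ w : ℝ, StrictMono (fun s : ℝ => F (w, s)))

include hμ hFsm hinc

omit hμ hFsm hinc in
lemma PhiZeroSet_nonempty : (PhiZeroSet F μ).Nonempty :=
  ⟨Phiab F μ 1 1, 1, one_pos, le_rfl, rfl⟩

lemma PhiZeroSet_bddAbove' : BddAbove (PhiZeroSet F μ) := by
  refine ⟨F (bfun μ 1, 1) - F (bfun μ 1, 0), ?_⟩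
  rintro r ⟨ε, hε, hε1, rfl⟩
  have h1 : Phiab F μ ε 1 ≤ F (bfun μ 1, 1) - F (bfun μ 1, ε) := by
    apply Phiab_le hμ hFsm hε1
    intro y hy1 hy2
    exact bfun_mono hμ (lt_of_lt_of_le hε hy1) hy2
  have h2 : F (bfun μ 1, 0) ≤ F (bfun μ 1, ε) := (hinc _).monotone hε.le
  linarith

lemma PhiZero_nonneg : 0 ≤ PhiZero F μ :=
  le_csSup_of_le (PhiZeroSet_bddAbove' hμ hFsm hinc) ⟨1, one_pos, le_rfl, rfl⟩
    (Phiab_nonneg hμ hFsm hinc one_pos le_rfl)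

lemma Phiab_le_PhiZero {ε : ℝ} (hε : 0 < ε) (hε1 : ε ≤ 1) :
    Phiab F μ ε 1 ≤ PhiZero F μ :=
  le_csSup (PhiZeroSet_bddAbove' hμ hFsm hinc) ⟨ε, hε, hε1, rfl⟩

omit hinc in
lemma Phi_increment {t1 t2 : ℝ} (h1 : 0 < t1) (h12 : t1 ≤ t2) :
    Phi F μ t2 - Phi F μ t1 = Phiab F μ t1 t2 := by
  rcases le_or_gt 1 t1 with ha | ha
  · rw [Phi, if_pos (le_trans ha h12), Phi, if_pos ha]
    have := Phiab_add hμ hFsm one_pos ha h12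
    linarith
  · rcases le_or_gt 1 t2 with hb | hb
    · rw [Phi, if_pos hb, Phi, if_neg (not_le.2 ha), if_pos h1]
      have := Phiab_add hμ hFsm h1 ha.le hb
      linarith
    · rw [Phi, if_neg (not_le.2 hb), if_pos (lt_of_lt_of_le h1 h12),
        Phi, if_neg (not_le.2 ha), if_pos h1]
      have := Phiab_add hμ hFsm h1 h12 hb.le
      linarith

omit hμ hFsm hinc in
lemma Phi_nonpos_eq {t : ℝ} (ht : t ≤ 0) : Phi F μ t = -PhiZero F μ := by
  rw [Phi, if_neg (by linarith), if_neg (by linarith)]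

lemma Phi_mono : Monotone (Phi F μ) := by
  intro t1 t2 h12
  rcases le_or_gt t1 0 with h1 | h1
  · rw [Phi_nonpos_eq h1]
    rcases le_or_gt t2 0 with h2 | h2
    · rw [Phi_nonpos_eq h2]
    · rcases le_or_gt 1 t2 with h3 | h3
      · rw [Phi, if_pos h3]
        have := Phiab_nonneg hμ hFsm hinc one_pos h3
        have := PhiZero_nonneg hμ hFsm hinc
        linarith
      · rw [Phi, if_neg (not_le.2 h3), if_pos h2]
        have := Phiab_le_PhiZero hμ hFsm hinc h2 h3.le
        linarith
  · have := Phi_increment hμ hFsm h1 h12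
    have := Phiab_nonneg hμ hFsm hinc h1 h12
    linarith

variable (hFusc : UpperSemicontinuous F)

include hFusc in
lemma Phi_rc : ∀ t : ℝ, ContinuousWithinAt (Phi F μ) (Ici t) t := by
  intro t
  rcases lt_trichotomy t 0 with ht | rfl | ht
  · have hconst : ∀ᶠ u in nhdsWithin t (Ici t), Phi F μ u = -PhiZero F μ := by
      have hmem : Iio (0:ℝ) ∈ nhdsWithin t (Ici t) := nhdsWithin_le_nhds (Iio_mem_nhds ht)
      filter_upwards [hmem] with u hu using Phi_nonpos_eq (le_of_lt hu)
    have : ContinuousWithinAt (fun _ : ℝ => -PhiZero F μ) (Ici t) t := continuousWithinAt_const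
    apply this.congr_of_eventuallyEq hconst
    exact Phi_nonpos_eq ht.le
  · rw [ContinuousWithinAt, Phi_nonpos_eq le_rfl]
    apply tendsto_order.2
    constructor
    · intro a ha
      filter_upwards [self_mem_nhdsWithin] with u hu
      have : Phi F μ 0 ≤ Phi F μ u := Phi_mono hμ hFsm hinc hu
      rw [Phi_nonpos_eq le_rfl] at this
      linarith
    · intro a ha
      have hδ : PhiZero F μ - (a + PhiZero F μ) < PhiZero F μ := by linarith
      obtain ⟨r, ⟨ε0, hε0, hε01, rfl⟩, hr⟩ :=
        exists_lt_of_lt_csSup (PhiZeroSet_nonempty (F := F) (μ := μ)) hδ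
      have hIco : Ico (0:ℝ) ε0 ∈ nhdsWithin (0:ℝ) (Ici (0:ℝ)) :=
        Ico_mem_nhdsGE_of_mem ⟨le_rfl, hε0⟩
      filter_upwards [hIco] with u hu
      rcases eq_or_lt_of_le hu.1 with rfl | hupos
      · rw [Phi_nonpos_eq le_rfl]; linarith
      · have h1 : Phi F μ u = -Phiab F μ u 1 := by
          rw [Phi, if_neg (by push_neg; linarith [hu.2, hε01]), if_pos hupos]
        have h2 : Phiab F μ u 1 = Phiab F μ u ε0 + Phiab F μ ε0 1 :=
          Phiab_add hμ hFsm hupos hu.2.le hε01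
        have h3 := Phiab_nonneg hμ hFsm hinc hupos hu.2.le
        rw [h1]; linarith
  · apply tendsto_order.2
    constructor
    · intro a ha
      filter_upwards [self_mem_nhdsWithin] with u hu
      exact lt_of_lt_of_le ha (Phi_mono hμ hFsm hinc hu)
    · intro a ha
      have hF := F_rc hFusc hinc (bfun μ (t+1)) t
      have hev1 : ∀ᶠ u in nhdsWithin t (Ici t),
          F (bfun μ (t+1), u) < F (bfun μ (t+1), t) + (a - Phi F μ t) :=
        (tendsto_order.1 hF).2 _ (by linarith)
      have hev2 : Icc t (t+1) ∈ nhdsWithin t (Ici t) :=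
        Icc_mem_nhdsGE_of_mem ⟨le_rfl, by linarith⟩
      filter_upwards [hev1, hev2, self_mem_nhdsWithin] with u h1 h2 h3
      rcases eq_or_lt_of_le (mem_Ici.1 h3) with rfl | htu
      · exact ha
      · have hi : Phi F μ u - Phi F μ t = Phiab F μ t u :=
          Phi_increment hμ hFsm ht htu.le
        have hb : Phiab F μ t u ≤ F (bfun μ (t+1), u) - F (bfun μ (t+1), t) := by
          apply Phiab_le hμ hFsm htu.le
          intro y hy1 hy2
          exact bfun_mono hμ (lt_of_lt_of_le ht hy1) (le_trans hy2 h2.2)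
        linarith

end PhiFacts

section Stieltjes

variable [IsProbabilityMeasure μ] (hμ : Centred μ) (hFsm : StrictlySupermodular F)
  (hinc : ∀ w : ℝ, StrictMono (fun s : ℝ => F (w, s)))
  (hFusc : UpperSemicontinuous F)

def PhiSt (hμ : Centred μ) (hFsm : StrictlySupermodular F)
    (hinc : ∀ w : ℝ, StrictMono (fun s : ℝ => F (w, s)))
    (hFusc : UpperSemicontinuous F) : StieltjesFunction ℝ where
  toFun := Phi F μ
  mono' := Phi_mono hμ hFsm hinc
  right_continuous' := Phi_rc hμ hFsm hinc hFusc

include hμ hFsm hinc hFusc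

lemma PhiSt_Iic_zero : (PhiSt hμ hFsm hinc hFusc).measure (Iic (0:ℝ)) = 0 := by
  have hbot : Filter.Tendsto (Phi F μ) Filter.atBot (nhds (-PhiZero F μ)) := by
    apply Filter.Tendsto.congr' _ (tendsto_const_nhds (α := ℝ))
    filter_upwards [Filter.Iic_mem_atBot (0:ℝ)] with u hu
    exact (Phi_nonpos_eq hu).symm
  rw [StieltjesFunction.measure_Iic _ hbot]
  have : Phi F μ 0 = -PhiZero F μ := Phi_nonpos_eq le_rfl
  simp [PhiSt, this]

lemma PhiSt_Ioc (a b : ℝ) :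
    (PhiSt hμ hFsm hinc hFusc).measure (Ioc a b) = ENNReal.ofReal (Phi F μ b - Phi F μ a) :=
  StieltjesFunction.measure_Ioc _ a b

/-! ### The key pointwise inequalities -/

lemma keyA {x t1 t2 : ℝ} (ht1 : 0 ≤ t1) (h12 : t1 < t2) (hbar : barycenter μ x ≤ t1) :
    F (x, t2) - F (x, t1) ≤ Phi F μ t2 - Phi F μ t1 := by
  have hev : ∀ᶠ ε in nhdsWithin t1 (Ioi t1),
      F (x, t2) - F (x, ε) ≤ Phi F μ t2 - Phi F μ ε := by
    filter_upwards [Ioo_mem_nhdsGT_of_mem (Set.mem_Ico.2 ⟨le_rfl, h12⟩)] with ε hε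
    have hεpos : 0 < ε := lt_of_le_of_lt ht1 hε.1
    have hxb : x ≤ bfun μ ε := le_bfun hμ.1 (lt_of_le_of_lt hbar hε.1)
    have h1 : F (x, t2) - F (x, ε) ≤ F (bfun μ ε, t2) - F (bfun μ ε, ε) :=
      supermod_nonstrict hFsm hxb hε.2.le
    have h2 : F (bfun μ ε, t2) - F (bfun μ ε, ε) ≤ Phiab F μ ε t2 :=
      le_Phiab hμ hFsm hεpos hε.2.le
    have h3 : Phi F μ t2 - Phi F μ ε = Phiab F μ ε t2 :=
      Phi_increment hμ hFsm hεpos hε.2.le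
    linarith
  have hlim1 : Filter.Tendsto (fun ε => F (x, t2) - F (x, ε)) (nhdsWithin t1 (Ioi t1))
      (nhds (F (x, t2) - F (x, t1))) := by
    apply Filter.Tendsto.const_sub
    exact (F_rc hFusc hinc x t1).mono_left (nhdsWithin_mono t1 Ioi_subset_Ici_self)
  have hlim2 : Filter.Tendsto (fun ε => Phi F μ t2 - Phi F μ ε) (nhdsWithin t1 (Ioi t1))
      (nhds (Phi F μ t2 - Phi F μ t1)) := by
    apply Filter.Tendsto.const_sub
    exact (Phi_rc hμ hFsm hinc hFusc t1).mono_left (nhdsWithin_mono t1 Ioi_subset_Ici_self)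
  exact le_of_tendsto_of_tendsto hlim1 hlim2 hev

lemma keyB {x t1 t2 : ℝ} (ht1 : 0 ≤ t1) (h12 : t1 < t2) (hbar : t2 ≤ barycenter μ x) :
    Phi F μ t2 - Phi F μ t1 ≤ F (x, t2) - F (x, t1) := by
  have hev : ∀ᶠ ε in nhdsWithin t1 (Ioi t1),
      Phi F μ t2 - Phi F μ ε ≤ F (x, t2) - F (x, ε) := by
    filter_upwards [Ioo_mem_nhdsGT_of_mem (Set.mem_Ico.2 ⟨le_rfl, h12⟩)] with ε hε
    have hεpos : 0 < ε := lt_of_le_of_lt ht1 hε.1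
    have h3 : Phi F μ t2 - Phi F μ ε = Phiab F μ ε t2 :=
      Phi_increment hμ hFsm hεpos hε.2.le
    have h2 : Phiab F μ ε t2 ≤ F (x, t2) - F (x, ε) := by
      apply Phiab_le hμ hFsm hε.2.le
      intro y hy1 hy2
      exact bfun_le hμ (lt_of_lt_of_le hεpos hy1) (le_trans hy2 hbar)
    linarith
  have hlim1 : Filter.Tendsto (fun ε => Phi F μ t2 - Phi F μ ε) (nhdsWithin t1 (Ioi t1))
      (nhds (Phi F μ t2 - Phi F μ t1)) := by
    apply Filter.Tendsto.const_sub
    exact (Phi_rc hμ hFsm hinc hFusc t1).mono_left (nhdsWithin_mono t1 Ioi_subset_Ici_self)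
  have hlim2 : Filter.Tendsto (fun ε => F (x, t2) - F (x, ε)) (nhdsWithin t1 (Ioi t1))
      (nhds (F (x, t2) - F (x, t1))) := by
    apply Filter.Tendsto.const_sub
    exact (F_rc hFusc hinc x t1).mono_left (nhdsWithin_mono t1 Ioi_subset_Ici_self)
  exact le_of_tendsto_of_tendsto hlim1 hlim2 hev

lemma keyMain [NullSingletonClass μ] {x s : ℝ} (hs : 0 ≤ s) :
    F (x, s) - F (x, barycenter μ x) ≤ Phi F μ s - Phi F μ (barycenter μ x) := by
  rcases lt_trichotomy s (barycenter μ x) with h | h | h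
  · have := keyB hμ hFsm hinc hFusc (x := x) hs h le_rfl
    linarith
  · rw [h]; simp
  · have := keyA hμ hFsm hinc hFusc (x := x) (bary_nonneg hμ x) h le_rfl
    linarith

end Stieltjes

/-! ### The Hardy–Littlewood inequality -/

lemma HL [IsProbabilityMeasure μ] [NullSingletonClass μ] (hμ : Centred μ)
    (π : Measure (ℝ × ℝ)) [IsProbabilityMeasure π] (hπ : RogersAdmissible μ π)
    {t : ℝ} (ht : 0 < t) :
    π {p : ℝ × ℝ | t ≤ p.2} ≤ μ {x : ℝ | t ≤ barycenter μ x} := by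
  obtain ⟨hπint, hπmean, hπM, hπiv, hπmap⟩ := hπ
  set S : Set (ℝ × ℝ) := {p : ℝ × ℝ | t ≤ p.2} with hS
  have hSmeas : MeasurableSet S := measurable_snd measurableSet_Ici
  set A : Set ℝ := {x : ℝ | t ≤ barycenter μ x} with hA
  have hAne : A.Nonempty := bfun_set_nonempty hμ.1 t
  have hAbdd : BddBelow A := bfun_set_bddBelow hμ t ht
  set b0 : ℝ := sInf A with hb0
  have hb0t : b0 ≤ t := csInf_le hAbdd (bary_ge_self hμ.1 t)
  -- Step 1: for every w < b0, π S ≤ μ (Ici w)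
  have hstep : ∀ w : ℝ, w < b0 → π S ≤ μ (Ici w) := by
    intro w hw
    have hβw : barycenter μ w < t := by
      by_contra hc
      exact absurd (csInf_le hAbdd (not_lt.1 hc)) (not_le.2 hw)
    have h1 : t * (π S).toReal ≤ ∫ p in S, p.1 ∂π := hπiv t ht.le
    have hpos : Integrable (fun p : ℝ × ℝ => max (p.1 - w) 0) π :=
      (hπint.sub (integrable_const w)).pos_part
    have h2 : ∫ p in S, p.1 ∂π ≤ w * (π S).toReal + ∫ p in S, max (p.1 - w) 0 ∂π := by
      have := setIntegral_mono_on (s := S) (g := fun p : ℝ × ℝ => w + max (p.1 - w) 0)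
        hπint.integrableOn
        (((integrable_const w).add hpos).integrableOn)
        hSmeas (fun p _ => by
          show p.1 ≤ w + max (p.1 - w) 0
          rcases le_or_gt p.1 w with h | h
          · have hm : max (p.1 - w) 0 = 0 := max_eq_right (by linarith)
            rw [hm]; linarith
          · have hm : max (p.1 - w) 0 = p.1 - w := max_eq_left (by linarith)
            rw [hm]; linarith)
      calc ∫ p in S, p.1 ∂π ≤ ∫ p in S, (w + max (p.1 - w) 0) ∂π := this
        _ = w * (π S).toReal + ∫ p in S, max (p.1 - w) 0 ∂π := by
            rw [integral_add (integrable_const w).integrableOn hpos.integrableOn]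
            simp [Measure.restrict_apply_univ, mul_comm, measureReal_def]
    have h3 : ∫ p in S, max (p.1 - w) 0 ∂π ≤ ∫ p, max (p.1 - w) 0 ∂π :=
      setIntegral_le_integral hpos (Filter.Eventually.of_forall (fun p => le_max_right _ _))
    have h4 : ∫ p : ℝ × ℝ, max (p.1 - w) 0 ∂π = ∫ x, max (x - w) 0 ∂μ := by
      rw [← hπmap, integral_map measurable_fst.aemeasurable]
      exact (((measurable_id.sub measurable_const).max measurable_const).comp
        measurable_id).aestronglyMeasurable
    have hgint : Integrable (fun x : ℝ => max (x - w) 0) μ :=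
      (hμ.1.sub (integrable_const w)).pos_part
    have h5 : ∫ x, max (x - w) 0 ∂μ = ∫ x in Ici w, (x - w) ∂μ := by
      rw [← integral_add_compl measurableSet_Ici hgint]
      have e1 : ∫ x in Ici w, max (x - w) 0 ∂μ = ∫ x in Ici w, (x - w) ∂μ :=
        setIntegral_congr_fun measurableSet_Ici
          (fun x hx => max_eq_left (by simp at hx; linarith))
      have e2 : ∫ x in (Ici w)ᶜ, max (x - w) 0 ∂μ = 0 := by
        rw [setIntegral_congr_fun measurableSet_Ici.compl
          (g := fun _ => (0:ℝ)) (fun x hx => by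
            simp only [compl_Ici, mem_Iio] at hx
            exact max_eq_right (by linarith))]
        simp
      rw [e1, e2, add_zero]
    have h6 : ∫ x in Ici w, (x - w) ∂μ ≤ (t - w) * (μ (Ici w)).toReal := by
      have hsub : ∫ x in Ici w, (x - w) ∂μ
          = (∫ x in Ici w, x ∂μ) - w * (μ (Ici w)).toReal := by
        rw [integral_sub hμ.1.integrableOn (integrable_const w).integrableOn]
        simp [Measure.restrict_apply_univ, mul_comm, measureReal_def]
      rcases eq_or_ne (μ (Ici w)) 0 with hz | hz
      · rw [hsub, Measure.restrict_eq_zero.2 hz]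
        simp [hz]
      · rw [hsub, setIntegral_Ici_eq hμ.1 w hz]
        have hβge : w ≤ barycenter μ w := bary_ge_self hμ.1 w
        nlinarith [ENNReal.toReal_nonneg (a := μ (Ici w))]
    have htw : 0 < t - w := by linarith [hb0t]
    have hfinal : (π S).toReal ≤ (μ (Ici w)).toReal := by nlinarith
    exact (ENNReal.toReal_le_toReal (measure_ne_top π S) (measure_ne_top μ _)).1 hfinal
  -- Step 2: pass to the limit w ↑ b0
  have hlim : π S ≤ μ (Ici b0) := by
    have htend : Filter.Tendsto (fun n : ℕ => μ (Ici (b0 - 1 / (n + 1))))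
        Filter.atTop (nhds (μ (⋂ n : ℕ, Ici (b0 - 1 / (n + 1))))) := by
      apply MeasureTheory.tendsto_measure_iInter_atTop
        (fun n => measurableSet_Ici.nullMeasurableSet)
      · intro m n hmn
        apply Ici_subset_Ici.2
        have : (1:ℝ) / (n + 1) ≤ 1 / (m + 1) := by
          apply div_le_div_of_nonneg_left one_pos.le (by positivity)
          exact_mod_cast add_le_add_left (Nat.cast_le.2 hmn) 1
        linarith
      · exact ⟨0, measure_ne_top μ _⟩
    have hInter : (⋂ n : ℕ, Ici (b0 - 1 / ((n:ℝ) + 1))) = Ici b0 := by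
      apply Subset.antisymm
      · intro x hx
        simp only [mem_iInter, mem_Ici] at hx ⊢
        by_contra hc
        obtain ⟨n, hn⟩ := exists_nat_one_div_lt (show 0 < b0 - x by linarith [not_le.1 hc])
        have := hx n
        linarith
      · intro x hx
        simp only [mem_iInter, mem_Ici] at hx ⊢
        intro n
        have : (0:ℝ) < 1 / (n + 1) := by positivity
        linarith
    rw [hInter] at htend
    apply ge_of_tendsto htend
    filter_upwards with n
    apply hstep
    have : (0:ℝ) < 1 / ((n:ℝ) + 1) := by positivity
    linarith
  calc π S ≤ μ (Ici b0) := hlim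
    _ = μ (Ioi b0) := (measure_congr Ioi_ae_eq_Ici).symm
    _ ≤ μ A := by
      apply measure_mono
      intro x hx
      obtain ⟨a, haA, hax⟩ := exists_lt_of_csInf_lt hAne (mem_Ioi.1 hx)
      exact le_trans haA (bary_mono hμ.1 hax.le)

end AYaux

open AYaux in
theorem azemaYor_optimal_usc' (μ : Measure ℝ) [IsProbabilityMeasure μ] [NullSingletonClass μ]
    (hμ : Centred μ)
    (F : ℝ × ℝ → ℝ) (hFusc : UpperSemicontinuous F) (hFsm : StrictlySupermodular F)
    (hinc : ∀ w : ℝ, StrictMono (fun s : ℝ => F (w, s)))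
    (hint : Integrable (fun w : ℝ => F (w, barycenter μ w)) μ)
    (π : Measure (ℝ × ℝ)) [IsProbabilityMeasure π]
    (hπ : RogersAdmissible μ π) (hFπ : Integrable F π) :
    (∫ p, F p ∂π) ≤ ∫ w, F (w, barycenter μ w) ∂μ := by
  obtain ⟨hπint, hπmean, hπM, hπiv, hπmap⟩ := hπ
  have hβmeas : Measurable (barycenter μ) := (bary_mono hμ.1).measurable
  have hFmeas : Measurable F := hFusc.measurable
  have hGmeas : Measurable (fun x : ℝ => F (x, barycenter μ x)) :=
    hFmeas.comp (measurable_id.prodMk hβmeas)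
  have hGπint : Integrable (fun p : ℝ × ℝ => F (p.1, barycenter μ p.1)) π := by
    have := (integrable_map_measure (f := Prod.fst (α := ℝ) (β := ℝ))
      (g := fun x : ℝ => F (x, barycenter μ x))
      (by rw [hπmap]; exact hGmeas.aestronglyMeasurable)
      measurable_fst.aemeasurable (μ := π)).1
    rw [hπmap] at this
    exact this hint
  have hGeq : ∫ w, F (w, barycenter μ w) ∂μ = ∫ p : ℝ × ℝ, F (p.1, barycenter μ p.1) ∂π := by
    rw [← hπmap, integral_map measurable_fst.aemeasurable]
    rw [hπmap]
    exact hGmeas.aestronglyMeasurable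
  set H : ℝ × ℝ → ℝ := fun p => F p - F (p.1, barycenter μ p.1) with hHdef
  have hHint : Integrable H π := hFπ.sub hGπint
  have hHsplit : ∫ p, H p ∂π = (∫ p, F p ∂π) - ∫ p : ℝ × ℝ, F (p.1, barycenter μ p.1) ∂π :=
    integral_sub hFπ hGπint
  suffices hD : ∫ p, H p ∂π ≤ 0 by
    rw [hGeq]; linarith
  -- a.e. properties
  have haeM : ∀ᵐ p ∂π, (0:ℝ) ≤ p.2 := by
    rw [ae_iff]
    apply measure_mono_null _ hπM
    intro p hp
    simp only [mem_setOf_eq, not_le] at hp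
    intro hpM
    exact absurd hpM.1 (not_le.2 hp)
  have haeKI : ∀ᵐ p ∂π, H p ≤ Phi F μ p.2 - Phi F μ (barycenter μ p.1) := by
    filter_upwards [haeM] with p hp
    exact keyMain hμ hFsm hinc hFusc hp
  -- the Stieltjes measure
  set Λ : Measure ℝ := (PhiSt hμ hFsm hinc hFusc).measure with hΛdef
  have hΛIoc : ∀ a b : ℝ, Λ (Ioc a b) = ENNReal.ofReal (Phi F μ b - Phi F μ a) :=
    fun a b => PhiSt_Ioc hμ hFsm hinc hFusc a b
  have hΛpos : ∀ᵐ t ∂Λ, 0 < t := by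
    rw [ae_iff]
    apply measure_mono_null _ (PhiSt_Iic_zero hμ hFsm hinc hFusc)
    intro t ht
    simpa using ht
  -- Fubini swap for measurable sets of the product
  have swap : ∀ C : Set ((ℝ × ℝ) × ℝ), MeasurableSet C →
      ∫⁻ p, Λ (Prod.mk p ⁻¹' C) ∂π = ∫⁻ t, π ((fun p => (p, t)) ⁻¹' C) ∂Λ := by
    intro C hC
    rw [← Measure.prod_apply hC, Measure.prod_apply_symm hC]
  -- the two product sets
  set C1 : Set ((ℝ × ℝ) × ℝ) :=
    {q | barycenter μ q.1.1 < q.2 ∧ q.2 ≤ q.1.2} with hC1def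
  set C2 : Set ((ℝ × ℝ) × ℝ) :=
    {q | q.1.2 < q.2 ∧ q.2 ≤ barycenter μ q.1.1} with hC2def
  have hC1meas : MeasurableSet C1 := by
    apply MeasurableSet.inter
    · exact measurableSet_lt ((hβmeas.comp measurable_fst).comp measurable_fst) measurable_snd
    · exact measurableSet_le measurable_snd (measurable_snd.comp measurable_fst)
  have hC2meas : MeasurableSet C2 := by
    apply MeasurableSet.inter
    · exact measurableSet_lt (measurable_snd.comp measurable_fst) measurable_snd
    · exact measurableSet_le measurable_snd ((hβmeas.comp measurable_fst).comp measurable_fst)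
  have hC1sec : ∀ p : ℝ × ℝ, Prod.mk p ⁻¹' C1 = Ioc (barycenter μ p.1) p.2 := by
    intro p; ext t; simp [hC1def, mem_Ioc]
  have hC2sec : ∀ p : ℝ × ℝ, Prod.mk p ⁻¹' C2 = Ioc p.2 (barycenter μ p.1) := by
    intro p; ext t; simp [hC2def, mem_Ioc]
  -- per-t comparison
  have hpert : ∀ᵐ t ∂Λ, π ((fun p => (p, t)) ⁻¹' C1) ≤ π ((fun p => (p, t)) ⁻¹' C2) := by
    filter_upwards [hΛpos] with t ht
    set Sσ : Set (ℝ × ℝ) := {p | t ≤ p.2} with hSσ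
    set B : Set (ℝ × ℝ) := {p | t ≤ barycenter μ p.1} with hB
    have hSmeas : MeasurableSet Sσ := measurable_snd measurableSet_Ici
    have hBmeas : MeasurableSet B := (hβmeas.comp measurable_fst) measurableSet_Ici
    have he1 : (fun p => (p, t)) ⁻¹' C1 = Sσ \ B := by
      ext p
      simp only [hC1def, mem_preimage, mem_setOf_eq, mem_diff, hSσ, hB, not_le]
      tauto
    have he2 : (fun p => (p, t)) ⁻¹' C2 = B \ Sσ := by
      ext p
      simp only [hC2def, mem_preimage, mem_setOf_eq, mem_diff, hSσ, hB, not_le]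
      tauto
    rw [he1, he2]
    have hHL : π Sσ ≤ π B := by
      have hmap : π B = μ {x | t ≤ barycenter μ x} := by
        have hth := Measure.map_apply (μ := π) measurable_fst
          (show MeasurableSet {x : ℝ | t ≤ barycenter μ x} from hβmeas measurableSet_Ici)
        rw [hπmap] at hth
        exact hth.symm
      rw [hmap]
      exact HL hμ π ⟨hπint, hπmean, hπM, hπiv, hπmap⟩ ht
    have h1 : π (Sσ ∩ B) + π (Sσ \ B) = π Sσ := measure_inter_add_diff Sσ hBmeas
    have h2 : π (B ∩ Sσ) + π (B \ Sσ) = π B := measure_inter_add_diff B hSmeas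
    rw [inter_comm] at h2
    have hfin : π (Sσ ∩ B) ≠ ⊤ := measure_ne_top π _
    have : π (Sσ ∩ B) + π (Sσ \ B) ≤ π (Sσ ∩ B) + π (B \ Sσ) := by
      rw [h1]
      calc π Sσ ≤ π B := hHL
        _ = π (Sσ ∩ B) + π (B \ Sσ) := h2.symm
    exact (ENNReal.add_le_add_iff_left hfin).1 this
  -- assemble the lintegral chain
  have hLplusLminus :
      ∫⁻ p, Λ (Ioc (barycenter μ p.1) p.2) ∂π ≤ ∫⁻ p, Λ (Ioc p.2 (barycenter μ p.1)) ∂π := by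
    have e1 : ∫⁻ p, Λ (Ioc (barycenter μ p.1) p.2) ∂π
        = ∫⁻ t, π ((fun p => (p, t)) ⁻¹' C1) ∂Λ := by
      rw [← swap C1 hC1meas]
      exact lintegral_congr fun p => by rw [hC1sec p]
    have e2 : ∫⁻ p, Λ (Ioc p.2 (barycenter μ p.1)) ∂π
        = ∫⁻ t, π ((fun p => (p, t)) ⁻¹' C2) ∂Λ := by
      rw [← swap C2 hC2meas]
      exact lintegral_congr fun p => by rw [hC2sec p]
    rw [e1, e2]
    exact lintegral_mono_ae hpert
  set P : ENNReal := ∫⁻ p, ENNReal.ofReal (H p) ∂π with hPdef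
  set N : ENNReal := ∫⁻ p, ENNReal.ofReal (-H p) ∂π with hNdef
  have hNfin : N ≠ ⊤ := by
    apply ne_of_lt
    calc N ≤ ∫⁻ p, ↑‖H p‖₊ ∂π := lintegral_mono fun p => by
          calc ENNReal.ofReal (-H p) ≤ ↑‖-H p‖₊ := Real.ofReal_le_enorm _
            _ = ↑‖H p‖₊ := by rw [nnnorm_neg]
      _ < ⊤ := hHint.2
  have hPleL : P ≤ ∫⁻ p, Λ (Ioc (barycenter μ p.1) p.2) ∂π := by
    apply lintegral_mono_ae
    filter_upwards [haeKI] with p hp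
    rw [hΛIoc]
    exact ENNReal.ofReal_le_ofReal hp
  have hLleN : ∫⁻ p, Λ (Ioc p.2 (barycenter μ p.1)) ∂π ≤ N := by
    apply lintegral_mono_ae
    filter_upwards [haeKI] with p hp
    rw [hΛIoc]
    exact ENNReal.ofReal_le_ofReal (by linarith)
  have hPN : P ≤ N := le_trans hPleL (le_trans hLplusLminus hLleN)
  rw [integral_eq_lintegral_pos_part_sub_lintegral_neg_part hHint]
  have := ENNReal.toReal_mono hNfin hPN
  simp only [← hPdef, ← hNdef]
  linarith

/-- Azéma–Yor optimality for upper semicontinuous strictly supermodular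
functions increasing in the running maximum. -/
theorem azemaYor_optimal_usc (μ : Measure ℝ) [IsProbabilityMeasure μ] [NullSingletonClass μ]
    (hμ : Centred μ)
    (F : ℝ × ℝ → ℝ) (hFusc : UpperSemicontinuous F) (hFsm : StrictlySupermodular F)
    (hinc : ∀ w : ℝ, StrictMono (fun s : ℝ => F (w, s)))
    (hint : Integrable (fun w : ℝ => F (w, barycenter μ w)) μ)
    (π : Measure (ℝ × ℝ)) [IsProbabilityMeasure π]
    (hπ : RogersAdmissible μ π) (hFπ : Integrable F π) :
    (∫ p, F p ∂π) ≤ ∫ w, F (w, barycenter μ w) ∂μ :=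
  azemaYor_optimal_usc' μ hμ F hFusc hFsm hinc hint π hπ hFπ
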